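/- Let h : S¹ → S¹ be a homeomorphism and suppose there exist constants L > 0, δ > 0, m₁ > 1, M₁ ≥ m₁, M₂ > 1 such that: for every interval [a,b] of length < L there exist r ∈ ℕ and maps such that an expansion F₁ (a composition of r maps each expanding lengths by a factor in [m₁, M₁]) takes [a,b] to an interval of length in [L, L·M₁], while the corresponding composition F₂ of r maps each expanding lengths by a factor at most M₂ takes h⁻¹([a,b]) to an interval of length ≥ δ. Then h⁻¹ is α-Hölder continuous for α = ln m₁ / (ln m₁ + ln(M₂/m₁)) (up to a multiplicative constant). -/

import Mathlib

/-- Hölder continuity from expansion: let `k = h⁻¹` be the inverse of a circle homeomorphism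
(modelled as an increasing map of `ℝ`).  Assume there are constants `L > 0`, `δ > 0`,
`1 < m₁ ≤ M₁`, `1 < M₂` such that for every interval `[a,b]` of length `< L` there is `r ≥ 0`
with: the expansion by compositions of maps expanding lengths by factors in `[m₁, M₁]` takes
`[a,b]` to length in `[L, L·M₁]` (i.e. `L ≤ (b-a)·m₁^r` and `(b-a)·m₁^r ≤ L·M₁`), while the
corresponding composition expands `[k a, k b]` by a factor at most `M₂^r` to length `≥ δ`
(i.e. `δ ≤ (k b - k a)·M₂^r`).  Then, up to a multiplicative constant, for
`α = ln m₁ / (ln m₁ + ln(M₂/m₁))` one has `b - a ≤ C·(k b - k a)^α`, i.e. the conjugating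
homeomorphism is `α`-Hölder continuous. -/
theorem holder_continuity_of_conjugacy_from_expansion
    (L δ m₁ M₁ M₂ : ℝ) (hL : 0 < L) (hδ : 0 < δ)
    (hm₁ : 1 < m₁) (hM₁ : m₁ ≤ M₁) (hM₂ : 1 < M₂)
    (k : ℝ → ℝ) (hk : StrictMono k)
    (hexp : ∀ a b : ℝ, a < b → b - a < L → ∃ r : ℝ, 0 ≤ r ∧
      L ≤ (b - a) * m₁ ^ r ∧ (b - a) * m₁ ^ r ≤ L * M₁ ∧ δ ≤ (k b - k a) * M₂ ^ r) :
    ∃ C > 0, ∀ a b : ℝ, a < b → b - a < L →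
      b - a ≤ C * (k b - k a) ^ (Real.log m₁ / (Real.log m₁ + Real.log (M₂ / m₁))) := by

  have hm₀ : (0:ℝ) < m₁ := lt_trans one_pos hm₁
  have hM₂₀ : (0:ℝ) < M₂ := lt_trans one_pos hM₂
  have hlogm : 0 < Real.log m₁ := Real.log_pos hm₁
  have hlogM₂ : 0 < Real.log M₂ := Real.log_pos hM₂
  have hM₁0 : 0 < M₁ := lt_of_lt_of_le hm₀ hM₁
  have hsum : Real.log m₁ + Real.log (M₂ / m₁) = Real.log M₂ := by
    rw [Real.log_div (ne_of_gt hM₂₀) (ne_of_gt hm₀)]; ring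
  set α := Real.log m₁ / Real.log M₂ with hα
  have hα0 : 0 < α := div_pos hlogm hlogM₂
  set s := Real.log M₂ / Real.log m₁ with hs
  have hs0 : 0 < s := div_pos hlogM₂ hlogm
  have hαs : s * α = 1 := by
    rw [hα, hs]; field_simp
  refine ⟨L * M₁ / δ ^ α, by positivity, ?_⟩
  intro a b hab hlt
  rw [hsum, ← hα]
  obtain ⟨r, hr0, h1, h2, h3⟩ := hexp a b hab hlt
  have hd : 0 < b - a := sub_pos.2 hab
  have he : 0 < k b - k a := sub_pos.2 (hk hab)
  -- M₂ ^ r = (m₁ ^ r) ^ s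
  have hMr : M₂ ^ r = (m₁ ^ r) ^ s := by
    rw [← Real.rpow_mul hm₀.le]
    rw [Real.rpow_def_of_pos hm₀, Real.rpow_def_of_pos hM₂₀]
    congr 1
    rw [hs]
    field_simp
  have hkey : m₁ ^ r ≤ L * M₁ / (b - a) := (le_div_iff₀ hd).2 (by linarith [h2])
  have hMle : M₂ ^ r ≤ (L * M₁ / (b - a)) ^ s := by
    rw [hMr]
    exact Real.rpow_le_rpow (Real.rpow_nonneg hm₀.le r) hkey hs0.le
  have hδle : δ ≤ (k b - k a) * ((L * M₁) ^ s / (b - a) ^ s) := by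
    calc δ ≤ (k b - k a) * M₂ ^ r := h3
      _ ≤ (k b - k a) * ((L * M₁ / (b - a)) ^ s) := by
          exact mul_le_mul_of_nonneg_left hMle he.le
      _ = (k b - k a) * ((L * M₁) ^ s / (b - a) ^ s) := by
          rw [Real.div_rpow (by positivity) hd.le]
  have hds : 0 < (b - a) ^ s := Real.rpow_pos_of_pos hd s
  have hmain : (b - a) ^ s ≤ (k b - k a) * (L * M₁) ^ s / δ := by
    rw [le_div_iff₀ hδ]
    have h4 := mul_le_mul_of_nonneg_right hδle hds.le
    calc (b - a) ^ s * δ = δ * (b - a) ^ s := by ring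
      _ ≤ (k b - k a) * ((L * M₁) ^ s / (b - a) ^ s) * (b - a) ^ s := h4
      _ = (k b - k a) * (L * M₁) ^ s := by field_simp
  -- raise to power α
  have hfin : ((b - a) ^ s) ^ α ≤ ((k b - k a) * (L * M₁) ^ s / δ) ^ α :=
    Real.rpow_le_rpow hds.le hmain hα0.le
  rw [← Real.rpow_mul hd.le, hαs, Real.rpow_one] at hfin
  calc b - a ≤ ((k b - k a) * (L * M₁) ^ s / δ) ^ α := hfin
    _ = (k b - k a) ^ α * (L * M₁) / δ ^ α := by
        rw [Real.div_rpow (by positivity) hδ.le,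
          Real.mul_rpow he.le (by positivity), ← Real.rpow_mul (by positivity), hαs,
          Real.rpow_one]
    _ = L * M₁ / δ ^ α * (k b - k a) ^ α := by ring
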